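/- With R = ℤ/pℤ[t,t⁻¹] (p > 1) and B = [[-t⁻¹,1,0],[0,1,0],[0,1,-t]]: if v ∈ X₃ (i.e., ord(v₁) = n finite and ord(v₀), ord(v₂) ≥ n+2), then Bv ∈ X₂ (all coordinates of Bv are nonzero with equal lowest degree n); consequently Bⁿv ∈ X₁ for all n ≥ 3. -/

import Mathlib

open LaurentPolynomial

/-- lowest degree of `f` is at least `n` (ord 0 = +∞). -/
def ordGE {R : Type*} [CommRing R] (f : LaurentPolynomial R) (n : ℤ) : Prop :=
  ∀ m : ℤ, m < n → f.coeff m = 0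

/-- lowest degree of `f` is exactly `n`. -/
def ordEq {R : Type*} [CommRing R] (f : LaurentPolynomial R) (n : ℤ) : Prop :=
  f.coeff n ≠ 0 ∧ ordGE f n

noncomputable def Bm (p : ℕ) : Matrix (Fin 3) (Fin 3) (LaurentPolynomial (ZMod p)) :=
  !![-T (-1), 1, 0;
     0, 1, 0;
     0, 1, -T 1]

lemma T_mul_apply' {p : ℕ} (a : ℤ) (f : LaurentPolynomial (ZMod p)) (m : ℤ) :
    ((T a * f : LaurentPolynomial (ZMod p))).coeff m = f.coeff (m - a) := by
  rw [show (T a : LaurentPolynomial (ZMod p)) = AddMonoidAlgebra.single a 1 from rfl,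
    AddMonoidAlgebra.coeff_single_mul_apply, one_mul, neg_add_eq_sub]

lemma coeff0 {p : ℕ} (f g : LaurentPolynomial (ZMod p)) (m : ℤ) :
    ((-(T (-1) * f) + g : LaurentPolynomial (ZMod p))).coeff m = -(f.coeff (m + 1)) + g.coeff m := by
  rw [AddMonoidAlgebra.coeff_add, Finsupp.add_apply, AddMonoidAlgebra.coeff_neg, Finsupp.neg_apply, T_mul_apply']; ring_nf

lemma coeff2 {p : ℕ} (f g : LaurentPolynomial (ZMod p)) (m : ℤ) :
    ((f + -(T 1 * g) : LaurentPolynomial (ZMod p))).coeff m = f.coeff m + -(g.coeff (m - 1)) := by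
  rw [AddMonoidAlgebra.coeff_add, Finsupp.add_apply, AddMonoidAlgebra.coeff_neg, Finsupp.neg_apply, T_mul_apply']

lemma mv0 {p : ℕ} (w : Fin 3 → LaurentPolynomial (ZMod p)) :
    (Bm p).mulVec w 0 = -(T (-1) * w 0) + w 1 := by
  simp [Bm, Matrix.mulVec, dotProduct, Fin.sum_univ_three]

lemma mv1 {p : ℕ} (w : Fin 3 → LaurentPolynomial (ZMod p)) :
    (Bm p).mulVec w 1 = w 1 := by
  simp [Bm, Matrix.mulVec, dotProduct, Fin.sum_univ_three]

lemma mv2 {p : ℕ} (w : Fin 3 → LaurentPolynomial (ZMod p)) :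
    (Bm p).mulVec w 2 = w 1 + -(T 1 * w 2) := by
  simp [Bm, Matrix.mulVec, dotProduct, Fin.sum_univ_three]

lemma ordGE_mono {p : ℕ} {f : LaurentPolynomial (ZMod p)} {a b : ℤ}
    (h : ordGE f a) (hba : b ≤ a) : ordGE f b :=
  fun m hm => h m (lt_of_lt_of_le hm hba)

/-- one step: if `w` is in the `X₁`-type configuration (pivot in coordinate 0 at
order `m`, the other two of order `≥ r ≥ m`), then `B w` has pivot at `m - 1` and
coordinates 1, 2 of order `≥ r`. -/
lemma stepB {p : ℕ} (w : Fin 3 → LaurentPolynomial (ZMod p)) (m r : ℤ) (hmr : m ≤ r)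
    (e0 : ordEq (w 0) m) (g1 : ordGE (w 1) r) (g2 : ordGE (w 2) r) :
    ordEq ((Bm p).mulVec w 0) (m - 1) ∧ ordGE ((Bm p).mulVec w 1) r ∧
      ordGE ((Bm p).mulVec w 2) r := by
  obtain ⟨e0ne, e0ge⟩ := e0
  refine ⟨⟨?_, ?_⟩, ?_, ?_⟩
  · rw [mv0, coeff0, sub_add_cancel, g1 (m - 1) (lt_of_lt_of_le (by omega) hmr)]
    simpa using e0ne
  · intro j hj
    rw [mv0, coeff0, e0ge (j + 1) (by omega), g1 j (by omega)]
    ring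
  · intro j hj; rw [mv1]; exact g1 j hj
  · intro j hj
    rw [mv2, coeff2, g1 j hj, g2 (j - 1) (by omega)]
    ring

/-- If v ∈ X₃ (ord(v₁) = n, ord(v₀), ord(v₂) ≥ n+2), then Bv ∈ X₂ with all
lowest degrees equal to n; consequently Bⁿv ∈ X₁ for all n ≥ 3. -/
theorem B_on_X3 (p : ℕ) [Fact (1 < p)]
    (v : Fin 3 → LaurentPolynomial (ZMod p)) (n : ℤ)
    (h1 : ordEq (v 1) n) (h0 : ordGE (v 0) (n + 2)) (h2 : ordGE (v 2) (n + 2)) :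
    (∀ i : Fin 3, ordEq ((Bm p).mulVec v i) n) ∧
    (∀ k : ℕ, 3 ≤ k → ∃ m : ℤ, ordEq (((Bm p) ^ k).mulVec v 0) m ∧
      ordGE (((Bm p) ^ k).mulVec v 1) (m + 2) ∧
      ordGE (((Bm p) ^ k).mulVec v 2) (m + 2)) := by
  obtain ⟨h1ne, h1ge⟩ := h1
  have c0 : ordEq ((Bm p).mulVec v 0) n := by
    constructor
    · rw [mv0, coeff0, h0 (n + 1) (by omega)]
      simpa using h1ne
    · intro j hj
      rw [mv0, coeff0, h0 (j + 1) (by omega), h1ge j hj]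
      ring
  have c1 : ordEq ((Bm p).mulVec v 1) n := by
    rw [mv1]; exact ⟨h1ne, h1ge⟩
  have c2 : ordEq ((Bm p).mulVec v 2) n := by
    constructor
    · rw [mv2, coeff2, h2 (n - 1) (by omega)]
      simpa using h1ne
    · intro j hj
      rw [mv2, coeff2, h1ge j hj, h2 (j - 1) (by omega)]
      ring
  have part1 : ∀ i : Fin 3, ordEq ((Bm p).mulVec v i) n := by
    intro i
    fin_cases i
    exacts [c0, c1, c2]
  refine ⟨part1, ?_⟩
  -- key invariant for k ≥ 2
  have key : ∀ k : ℕ, 2 ≤ k →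
      ordEq (((Bm p) ^ k).mulVec v 0) (n + 1 - k) ∧
      ordGE (((Bm p) ^ k).mulVec v 1) n ∧
      ordGE (((Bm p) ^ k).mulVec v 2) n := by
    intro k hk
    induction k with
    | zero => omega
    | succ k ih =>
      rcases Nat.lt_or_ge k 2 with hk2 | hk2
      · -- k + 1 = 2, i.e. k = 1
        have hk1 : k = 1 := by omega
        subst hk1
        have hmv : ((Bm p) ^ 2).mulVec v = (Bm p).mulVec ((Bm p).mulVec v) := by
          rw [pow_two, ← Matrix.mulVec_mulVec]
        have := stepB ((Bm p).mulVec v) n n le_rfl c0 c1.2 c2.2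
        rw [hmv]
        refine ⟨?_, this.2.1, this.2.2⟩
        rw [show n + 1 - ((1 + 1 : ℕ) : ℤ) = n - 1 from by push_cast; ring]
        exact this.1
      · have ih' := ih hk2
        have hmv : ((Bm p) ^ (k + 1)).mulVec v = (Bm p).mulVec (((Bm p) ^ k).mulVec v) := by
          rw [pow_succ', ← Matrix.mulVec_mulVec]
        have := stepB (((Bm p) ^ k).mulVec v) (n + 1 - k) n (by omega)
          ih'.1 ih'.2.1 ih'.2.2
        rw [hmv]
        refine ⟨?_, this.2.1, this.2.2⟩
        rw [show n + 1 - ((k + 1 : ℕ) : ℤ) = n + 1 - (k : ℤ) - 1 from by push_cast; ring]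
        exact this.1
  intro k hk
  obtain ⟨e0, g1, g2⟩ := key k (by omega)
  exact ⟨n + 1 - k, e0, ordGE_mono g1 (by omega), ordGE_mono g2 (by omega)⟩
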